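/- Let n ≥ 1, p ∈ S_n an n-cycle, and let c be the full cycle {1,...,n} (so t = n, a = ⌊n/3⌋ ≥ 1). With r defined as r(x_j) = x_{j+a} for 1 ≤ j ≤ a, r(x_j) = x_{j-a} for a+1 ≤ j ≤ 2a, r(x) = x otherwise (where x_j = p^{j-1}(x_1)), every permutation q ∈ S_n commuting with p satisfies d_H(q, r) ≥ 2a/n. -/

import Mathlib

/-- the normalized Hamming distance on `S_n`. -/
noncomputable def hdist {n : ℕ} (p q : Equiv.Perm (Fin n)) : ℝ :=
  ((Finset.univ.filter fun i => p i ≠ q i).card : ℝ) / n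

/-- if `p` is an `n`-cycle `x_0 ↦ x_1 ↦ ⋯` and `r` is the block-swapping
permutation built from `a = ⌊n/3⌋ ≥ 1`, then every `q` commuting with `p` satisfies
`d_H(q, r) ≥ 2a/n`. -/
theorem stmt5 (n : ℕ) (hn : 1 ≤ n) (p r : Equiv.Perm (Fin n))
    (x : ℕ → Fin n) (hcyc : ∀ j, p (x j) = x (j + 1))
    (hsurj : ∀ y : Fin n, ∃ j < n, x j = y)
    (a : ℕ) (ha : a = n / 3) (ha1 : 1 ≤ a)
    (hr1 : ∀ j < a, r (x j) = x (j + a))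
    (hr2 : ∀ j, a ≤ j → j < 2 * a → r (x j) = x (j - a))
    (hr3 : ∀ j, 2 * a ≤ j → j < n → r (x j) = x j)
    (q : Equiv.Perm (Fin n)) (hq : p * q = q * p) :
    2 * (a : ℝ) / n ≤ hdist q r := by
  have hn0 : 0 < n := hn
  have h3a : 3 * a ≤ n := by
    have := Nat.div_mul_le_self n 3
    omega
  have han : a < n := by omega
  have h2an : 2 * a < n := by omega
  -- powers of p move along x
  have hpow : ∀ j i, (p ^ j) (x i) = x (i + j) := by
    intro j
    induction j with
    | zero => intro i; simp
    | succ j ih =>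
      intro i
      rw [pow_succ, Equiv.Perm.mul_apply, hcyc, ih]
      congr 1
      omega
  -- injectivity of x on [0, n)
  have hinj : ∀ i j, i < n → j < n → x i = x j → i = j := by
    have hsurj' : Function.Surjective (fun i : Fin n => x i) := by
      intro y
      obtain ⟨j, hj, hje⟩ := hsurj y
      exact ⟨⟨j, hj⟩, hje⟩
    have hinj' : Function.Injective (fun i : Fin n => x i) :=
      (Finite.injective_iff_surjective).mpr hsurj'
    intro i j hi hj h
    have h5 : (⟨i, hi⟩ : Fin n) = ⟨j, hj⟩ := hinj' h
    exact congrArg Fin.val h5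
  -- period n
  have hxn : x n = x 0 := by
    obtain ⟨j, hj, hje⟩ := hsurj (x n)
    rcases Nat.eq_zero_or_pos j with h0 | h0
    · rw [← hje, h0]
    · exfalso
      have h1 : p (x (n - 1)) = x n := by rw [hcyc]; congr 1; omega
      have h2 : p (x (j - 1)) = x j := by rw [hcyc]; congr 1; omega
      have h3 : p (x (n - 1)) = p (x (j - 1)) := by rw [h1, h2, hje]
      have h4 : x (n - 1) = x (j - 1) := p.injective h3
      have := hinj (n - 1) (j - 1) (by omega) (by omega) h4
      omega
  have hper : ∀ m, x (m + n) = x m := by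
    intro m
    have h1 : (p ^ m) (x n) = x (n + m) := hpow m n
    have h2 : (p ^ m) (x 0) = x (0 + m) := hpow m 0
    rw [hxn, h2] at h1
    rw [show m + n = n + m from Nat.add_comm m n, ← h1]
    simp
  have hmod : ∀ u, x u = x (u % n) := by
    intro u
    induction u using Nat.strong_induction_on with
    | _ u ih =>
      rcases Nat.lt_or_ge u n with h | h
      · rw [Nat.mod_eq_of_lt h]
      · have h1 : u = (u - n) + n := by omega
        have h2 : x u = x (u - n) := by
          have := hper (u - n)
          rw [← h1] at this
          exact this
        have h3 := ih (u - n) (by omega)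
        rw [h2, h3]
        congr 1
        conv_rhs => rw [h1]
        rw [Nat.add_mod_right]
  have hkey : ∀ u v, x u = x v → u % n = v % n := by
    intro u v h
    rw [hmod u, hmod v] at h
    exact hinj _ _ (Nat.mod_lt _ hn0) (Nat.mod_lt _ hn0) h
  have hcan : ∀ j u v : ℕ, x (j + u) = x (j + v) → u % n = v % n := by
    intro j u v h
    exact Nat.ModEq.add_left_cancel' j (hkey _ _ h)
  -- q = p^k on the orbit
  obtain ⟨k, hkn, hk0⟩ := hsurj (q (x 0))
  have hqx : ∀ j, q (x j) = x (j + k) := by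
    intro j
    induction j with
    | zero => rw [← hk0]; congr 1; omega
    | succ j ih =>
      have h1 : q (p (x j)) = p (q (x j)) := by
        have := congrFun (congrArg (fun e => (e : Equiv.Perm (Fin n)) ∘ id) hq) (x j)
        simpa [Equiv.Perm.mul_apply] using
          (congrArg (fun e : Equiv.Perm (Fin n) => e (x j)) hq).symm
      rw [hcyc] at h1
      rw [h1, ih, hcyc]
      congr 1
      omega
  -- block disagreement criteria
  have hb1 : ∀ j, j < a → q (x j) = r (x j) → k = a := by
    intro j hj h
    rw [hqx j, hr1 j hj] at h
    have := hcan j k a h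
    rwa [Nat.mod_eq_of_lt hkn, Nat.mod_eq_of_lt han] at this
  have hb2 : ∀ j, a ≤ j → j < 2 * a → q (x j) = r (x j) → a + k = n := by
    intro j h1 h2 h
    rw [hqx j, hr2 j h1 h2] at h
    have h' : x ((j - a) + (a + k)) = x ((j - a) + 0) := by
      rw [Nat.add_zero]
      rw [show (j - a) + (a + k) = j + k by omega]
      exact h
    have hm := hcan _ _ _ h'
    rw [Nat.zero_mod] at hm
    obtain ⟨c, hc⟩ := Nat.dvd_of_mod_eq_zero hm
    have hc0 : c ≠ 0 := by
      rintro rfl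
      simp at hc
      omega
    have hc2 : c < 2 := by
      by_contra hcc
      push_neg at hcc
      have h22 : n * 2 ≤ n * c := Nat.mul_le_mul_left n hcc
      omega
    have hc1 : c = 1 := by omega
    rw [hc1, Nat.mul_one] at hc
    omega
  have hb3 : ∀ j, 2 * a ≤ j → j < n → q (x j) = r (x j) → k = 0 := by
    intro j h1 h2 h
    rw [hqx j, hr3 j h1 h2] at h
    have h' : x (j + k) = x (j + 0) := by rw [Nat.add_zero]; exact h
    have hm := hcan _ _ _ h'
    rw [Nat.zero_mod, Nat.mod_eq_of_lt hkn] at hm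
    exact hm
  -- counting
  set S := Finset.univ.filter fun i => q i ≠ r i with hS
  have hsub : ∀ T : Finset ℕ, (∀ j ∈ T, j < n) → (∀ j ∈ T, q (x j) ≠ r (x j)) →
      T.card ≤ S.card := by
    intro T hTn hTd
    apply Finset.card_le_card_of_injOn (fun j => x j)
    · intro j hj
      simp only [hS, Finset.mem_coe, Finset.mem_filter, Finset.mem_univ, true_and]
      exact hTd j hj
    · intro u hu v hv h
      exact hinj u v (hTn u hu) (hTn v hv) h
  have hcard : 2 * a ≤ S.card := by
    by_cases hka : k = a
    · have hle := hsub (Finset.Ico a n)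
        (by intro j hj; exact (Finset.mem_Ico.mp hj).2)
        (by
          intro j hj heq
          have hj' := Finset.mem_Ico.mp hj
          rcases Nat.lt_or_ge j (2 * a) with h' | h'
          · have := hb2 j hj'.1 h' heq; omega
          · have := hb3 j h' hj'.2 heq; omega)
      rw [Nat.card_Ico] at hle
      omega
    · by_cases hkna : a + k = n
      · have hdisj : Disjoint (Finset.range a) (Finset.Ico (2 * a) n) := by
          rw [Finset.disjoint_left]
          intro j hj hj'
          rw [Finset.mem_range] at hj
          rw [Finset.mem_Ico] at hj'
          omega
        have hle := hsub (Finset.range a ∪ Finset.Ico (2 * a) n)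
          (by
            intro j hj
            rcases Finset.mem_union.mp hj with h' | h'
            · rw [Finset.mem_range] at h'; omega
            · exact (Finset.mem_Ico.mp h').2)
          (by
            intro j hj heq
            rcases Finset.mem_union.mp hj with h' | h'
            · rw [Finset.mem_range] at h'
              exact hka (hb1 j h' heq)
            · rw [Finset.mem_Ico] at h'
              have := hb3 j h'.1 h'.2 heq
              omega)
        rw [Finset.card_union_of_disjoint hdisj, Finset.card_range, Nat.card_Ico] at hle
        omega
      · have hle := hsub (Finset.range (2 * a))
          (by intro j hj; rw [Finset.mem_range] at hj; omega)
          (by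
            intro j hj heq
            rw [Finset.mem_range] at hj
            rcases Nat.lt_or_ge j a with h' | h'
            · exact hka (hb1 j h' heq)
            · exact hkna (hb2 j h' hj heq))
        rw [Finset.card_range] at hle
        exact hle
  -- conclude
  unfold hdist
  have hcast : (2 * (a : ℝ)) ≤ (S.card : ℝ) := by
    have : ((2 * a : ℕ) : ℝ) ≤ (S.card : ℝ) := Nat.cast_le.mpr hcard
    push_cast at this
    linarith
  have hnr : (0 : ℝ) < n := by exact_mod_cast hn0
  rw [hS] at hcast
  exact div_le_div_of_nonneg_right hcast hnr.le |>.trans_eq rfl
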